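/- Let θ > 0 and suppose a, b : ℝ → ℝ satisfy the Lipschitz condition (A1) and condition (A4), and that condition (A0) holds: limsup_{|x|→∞} c(x)·sgn(x) < 0 (so that in particular 0 < G_θ < ∞ and the invariant density μ_θ(x) = 1/(G_θ b(x)² φ_θ(x)) is well defined). Then all polynomial moments of the invariant density are finite: for every r ≥ 0, ∫_{-∞}^{+∞} |x|^r μ_θ(x) dx < ∞, i.e. the moment condition (A5) is satisfied. -/

import Mathlib

open MeasureTheory ENNReal
open Real Set

lemma aux_integrable_exp_neg_abs {η : ℝ} (hη : 0 < η) :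
    Integrable (fun x : ℝ => Real.exp (-η * |x|)) := by
  rw [← integrableOn_univ, ← Set.Iio_union_Ici (a := (0:ℝ)), integrableOn_union,
    integrableOn_Ici_iff_integrableOn_Ioi]
  constructor
  · rw [← (Measure.measurePreserving_neg (volume : Measure ℝ)).integrableOn_comp_preimage
        (Homeomorph.neg ℝ).measurableEmbedding]
    simp only [Function.comp_def, abs_neg, Set.neg_preimage, Set.neg_Iio, neg_zero]
    exact (exp_neg_integrableOn_Ioi 0 hη).congr_fun
      (fun x hx => by rw [abs_of_pos hx]) measurableSet_Ioi
  · exact (exp_neg_integrableOn_Ioi 0 hη).congr_fun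
      (fun x hx => by rw [abs_of_pos hx]) measurableSet_Ioi

lemma aux_pow_le_exp {η : ℝ} (hη : 0 < η) (N : ℕ) (u : ℝ) (hu : 0 ≤ u) :
    (1 + u) ^ N ≤ (1 + N / η) ^ N * Real.exp (η * u) := by
  rcases Nat.eq_zero_or_pos N with h0 | hN
  · simp only [h0, pow_zero, one_mul]
    exact Real.one_le_exp (by positivity)
  · have hN' : (0:ℝ) < N := by exact_mod_cast hN
    have h2 : 1 + η * u / N ≤ Real.exp (η * u / N) := by
      have := Real.add_one_le_exp (η * u / N); linarith
    have key : (1 + (N:ℝ) / η) * (1 + η * u / N) = 1 + u + η * u / N + N / η := by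
      field_simp; ring
    have h1 : (1:ℝ) + u ≤ (1 + N / η) * Real.exp (η * u / N) := by
      have hpos : (0:ℝ) < 1 + N / η := by positivity
      nlinarith [Real.exp_pos (η * u / N), div_nonneg (mul_nonneg hη.le hu) hN'.le,
        div_nonneg hN'.le hη.le]
    calc (1 + u) ^ N ≤ ((1 + N / η) * Real.exp (η * u / N)) ^ N :=
          pow_le_pow_left₀ (by positivity) h1 N
      _ = (1 + N / η) ^ N * Real.exp (η * u) := by
          rw [mul_pow, ← Real.exp_nat_mul]
          congr 2
          field_simp

lemma aux_abs_le_of_mem_uIoc {u v y : ℝ} (hy : y ∈ Set.uIoc u v) : |y| ≤ max |u| |v| := by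
  rcases Set.mem_uIoc.mp hy with h | h
  · exact abs_le_max_abs_abs h.1.le h.2
  · rw [max_comm]; exact abs_le_max_abs_abs h.1.le h.2



/-- For `θ > 0`, under (A1), (A4) and condition (A0), all polynomial moments of the
invariant density `μ_θ(x) = 1/(G_θ b(x)² φ_θ(x))` are finite: for every `r ≥ 0`,
`∫_{-∞}^{+∞} |x|^r μ_θ(x) dx < ∞`, i.e. the moment condition (A5) is satisfied. -/
theorem moments_of_invariant_density_finite (a b : ℝ → ℝ) (θ : ℝ) (hθ : 0 < θ)
    (L : ℝ) (hL : 0 < L)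
    (hlip : ∀ x y : ℝ, |a x - a y| + |b x - b y| ≤ L * |x - y|)
    (K p : ℝ) (hK : 0 < K) (hp : 0 ≤ p)
    (hb : ∀ x : ℝ, |b x|⁻¹ ≤ K * (1 + |x| ^ p))
    (hA0 : ∃ ε > (0:ℝ), ∃ R > (0:ℝ),
      (∀ x : ℝ, R ≤ x → a x / (b x) ^ 2 ≤ -ε) ∧
      (∀ x : ℝ, x ≤ -R → ε ≤ a x / (b x) ^ 2))
    (φ : ℝ → ℝ)
    (hφ : ∀ x : ℝ, φ x = Real.exp (-2 * θ * ∫ y in (0:ℝ)..x, a y / (b y) ^ 2))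
    (G : ℝ≥0∞)
    (hG : G = ∫⁻ x : ℝ, ENNReal.ofReal (1 / ((b x) ^ 2 * φ x))) :
    ∀ r : ℝ, 0 ≤ r →
      (∫⁻ x : ℝ, ENNReal.ofReal (|x| ^ r * (1 / (G.toReal * (b x) ^ 2 * φ x)))) < ⊤ := by
  intro r hr
  obtain ⟨ε, hε, R, hR, hA0r, hA0l⟩ := hA0
  set c : ℝ → ℝ := fun y => a y / b y ^ 2 with hc
  -- continuity / measurability
  have hacont : Continuous a := by
    apply (LipschitzWith.of_dist_le_mul (K := ⟨L, hL.le⟩) (f := a) ?_).continuous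
    intro x y
    have := hlip x y
    have hb0 := abs_nonneg (b x - b y)
    simp only [Real.dist_eq, NNReal.coe_mk]
    show |a x - a y| ≤ L * |x - y|
    linarith
  have hbcont : Continuous b := by
    apply (LipschitzWith.of_dist_le_mul (K := ⟨L, hL.le⟩) (f := b) ?_).continuous
    intro x y
    have := hlip x y
    have ha0 := abs_nonneg (a x - a y)
    simp only [Real.dist_eq, NNReal.coe_mk]
    show |b x - b y| ≤ L * |x - y|
    linarith
  have hmc : Measurable c :=
    hacont.measurable.div ((hbcont.measurable).pow_const 2)
  -- inverse square bound
  have hbinv2 : ∀ (y m : ℝ), |y| ≤ m → (b y ^ 2)⁻¹ ≤ (K * (1 + m ^ p)) ^ 2 := by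
    intro y m hym
    have hm0 : 0 ≤ m := le_trans (abs_nonneg y) hym
    by_cases hb0 : b y = 0
    · simp only [hb0]
      norm_num
      positivity
    · have h1 : (b y ^ 2)⁻¹ = (|b y|⁻¹) ^ 2 := by rw [inv_pow, sq_abs]
      have h3 : |y| ^ p ≤ m ^ p := Real.rpow_le_rpow (abs_nonneg y) hym hp
      have h2 : |b y|⁻¹ ≤ K * (1 + m ^ p) := le_trans (hb y) (by nlinarith)
      rw [h1]
      exact pow_le_pow_left₀ (by positivity) h2 2
  -- bound on |c|
  have hcb : ∀ (y m : ℝ), |y| ≤ m → |c y| ≤ (|a 0| + L * m) * (K * (1 + m ^ p)) ^ 2 := by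
    intro y m hym
    have hm0 : 0 ≤ m := le_trans (abs_nonneg y) hym
    have hay : |a y| ≤ |a 0| + L * m := by
      have h1 : |a y - a 0| ≤ L * |y| := by
        have := hlip y 0
        have hb0 := abs_nonneg (b y - b 0)
        simp only [sub_zero] at this
        linarith
      have h2 := abs_sub_abs_le_abs_sub (a y) (a 0)
      have h3 : L * |y| ≤ L * m := by nlinarith
      linarith
    have hbi : |(b y ^ 2)⁻¹| ≤ (K * (1 + m ^ p)) ^ 2 := by
      rw [abs_of_nonneg (by positivity)]
      exact hbinv2 y m hym
    calc |c y| = |a y| * |(b y ^ 2)⁻¹| := by rw [hc]; simp [div_eq_mul_inv, abs_mul]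
      _ ≤ (|a 0| + L * m) * (K * (1 + m ^ p)) ^ 2 :=
          mul_le_mul hay hbi (abs_nonneg _) (by positivity)
  -- interval integrability of c
  have hintc : ∀ u v : ℝ, IntervalIntegrable c volume u v := by
    intro u v
    rw [intervalIntegrable_iff]
    refine Measure.integrableOn_of_bounded
      (M := (|a 0| + L * max |u| |v|) * (K * (1 + (max |u| |v|) ^ p)) ^ 2)
      (by rw [Set.uIoc]; exact measure_Ioc_lt_top.ne) hmc.aestronglyMeasurable ?_
    filter_upwards [ae_restrict_mem measurableSet_uIoc] with y hy
    rw [Real.norm_eq_abs]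
    exact hcb y _ (aux_abs_le_of_mem_uIoc hy)
  set I : ℝ → ℝ := fun x => ∫ y in (0:ℝ)..x, c y with hI
  set M : ℝ := (|a 0| + L * R) * (K * (1 + R ^ p)) ^ 2 with hM
  have hM0 : 0 ≤ M := by positivity
  have hIbound : ∀ x : ℝ, |x| ≤ R → |I x| ≤ M * R := by
    intro x hx
    have h := intervalIntegral.norm_integral_le_of_norm_le_const
      (C := M) (f := c) (a := (0:ℝ)) (b := x) ?_
    · rw [Real.norm_eq_abs, sub_zero] at h
      calc |I x| ≤ M * |x| := h
        _ ≤ M * R := by nlinarith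
    · intro y hy
      rw [Real.norm_eq_abs]
      apply hcb y R
      have h1 : |y| ≤ max |0| |x| := aux_abs_le_of_mem_uIoc hy
      simp only [abs_zero, max_eq_right (abs_nonneg x)] at h1
      exact le_trans h1 hx
  set D : ℝ := M * R + ε * R with hD
  have key : ∀ x : ℝ, I x ≤ D - ε * |x| := by
    intro x
    rcases le_or_gt x (-R) with hx | hx
    · -- x ≤ -R
      have habs : |x| = -x := abs_of_nonpos (by linarith)
      have e1 : I (-R) + ∫ y in (-R)..x, c y = I x :=
        intervalIntegral.integral_add_adjacent_intervals (hintc 0 (-R)) (hintc (-R) x)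
      have e2 : ∫ y in x..(-R), (ε : ℝ) ≤ ∫ y in x..(-R), c y := by
        apply intervalIntegral.integral_mono_on hx intervalIntegrable_const (hintc x (-R))
        intro y hy
        exact hA0l y hy.2
      rw [intervalIntegral.integral_const, smul_eq_mul] at e2
      have e3 : (∫ y in (-R)..x, c y) = -∫ y in x..(-R), c y :=
        intervalIntegral.integral_symm x (-R)
      have e4 : |I (-R)| ≤ M * R := hIbound (-R) (by rw [abs_neg, abs_of_pos hR])
      have e5 : I (-R) ≤ M * R := le_trans (le_abs_self _) e4
      rw [habs, hD]; linarith
    rcases le_or_gt R x with hx2 | hx2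
    · -- R ≤ x
      have habs : |x| = x := abs_of_nonneg (by linarith)
      have e1 : I R + ∫ y in R..x, c y = I x :=
        intervalIntegral.integral_add_adjacent_intervals (hintc 0 R) (hintc R x)
      have e2 : ∫ y in R..x, c y ≤ ∫ y in R..x, (-ε : ℝ) := by
        apply intervalIntegral.integral_mono_on hx2 (hintc R x) intervalIntegrable_const
        intro y hy
        exact hA0r y hy.1
      rw [intervalIntegral.integral_const, smul_eq_mul] at e2
      have e4 : |I R| ≤ M * R := hIbound R (by rw [abs_of_pos hR])
      have e5 : I R ≤ M * R := le_trans (le_abs_self _) e4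
      rw [habs, hD]; nlinarith
    · -- |x| ≤ R
      have habs : |x| ≤ R := abs_le.mpr ⟨by linarith, by linarith⟩
      have e4 : I x ≤ M * R := le_trans (le_abs_self _) (hIbound x habs)
      have : ε * |x| ≤ ε * R := by nlinarith [abs_nonneg x]
      rw [hD]; linarith
  -- bound on φ⁻¹
  have hφb : ∀ x : ℝ, (φ x)⁻¹ ≤ Real.exp (2 * θ * D) * Real.exp (-(2 * θ * ε) * |x|) := by
    intro x
    rw [hφ x, ← Real.exp_neg, ← Real.exp_add]
    apply Real.exp_le_exp.mpr
    have := key x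
    nlinarith [abs_nonneg x]
  -- polynomial bound
  set η : ℝ := θ * ε with hη
  have hη0 : 0 < η := mul_pos hθ hε
  set n : ℕ := ⌈r⌉₊ with hn
  set m : ℕ := ⌈p⌉₊ with hm'
  set N : ℕ := n + 2 * m with hN
  set C₂ : ℝ := 4 * K ^ 2 * ((1 + N / η) ^ N) with hC₂
  have hpoly : ∀ x : ℝ, |x| ^ r * (K * (1 + |x| ^ p)) ^ 2 ≤ C₂ * Real.exp (η * |x|) := by
    intro x
    have hx0 : (0:ℝ) ≤ |x| := abs_nonneg x
    have h1 : |x| ^ r ≤ (1 + |x|) ^ n := by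
      calc |x| ^ r ≤ (1 + |x|) ^ r := Real.rpow_le_rpow hx0 (by linarith) hr
        _ ≤ (1 + |x|) ^ (n : ℝ) :=
            Real.rpow_le_rpow_of_exponent_le (by linarith) (Nat.le_ceil r)
        _ = (1 + |x|) ^ n := Real.rpow_natCast _ n
    have h2 : |x| ^ p ≤ (1 + |x|) ^ m := by
      calc |x| ^ p ≤ (1 + |x|) ^ p := Real.rpow_le_rpow hx0 (by linarith) hp
        _ ≤ (1 + |x|) ^ (m : ℝ) :=
            Real.rpow_le_rpow_of_exponent_le (by linarith) (Nat.le_ceil p)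
        _ = (1 + |x|) ^ m := Real.rpow_natCast _ m
    have h2' : 1 + |x| ^ p ≤ 2 * (1 + |x|) ^ m := by
      have : (1:ℝ) ≤ (1 + |x|) ^ m := one_le_pow₀ (by linarith)
      linarith
    have h3 : (K * (1 + |x| ^ p)) ^ 2 ≤ K ^ 2 * 4 * ((1 + |x|) ^ m) ^ 2 := by
      have hK2 : K * (1 + |x| ^ p) ≤ K * (2 * (1 + |x|) ^ m) := by nlinarith
      have := pow_le_pow_left₀ (by positivity) hK2 2
      calc (K * (1 + |x| ^ p)) ^ 2 ≤ (K * (2 * (1 + |x|) ^ m)) ^ 2 := this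
        _ = K ^ 2 * 4 * ((1 + |x|) ^ m) ^ 2 := by ring
    have h4 : |x| ^ r * (K * (1 + |x| ^ p)) ^ 2 ≤ 4 * K ^ 2 * (1 + |x|) ^ N := by
      have hrpow0 : (0:ℝ) ≤ |x| ^ r := Real.rpow_nonneg hx0 r
      have hbig : |x| ^ r * (K * (1 + |x| ^ p)) ^ 2
          ≤ (1 + |x|) ^ n * (K ^ 2 * 4 * ((1 + |x|) ^ m) ^ 2) := by
        apply mul_le_mul h1 h3 (by positivity) (by positivity)
      calc |x| ^ r * (K * (1 + |x| ^ p)) ^ 2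
          ≤ (1 + |x|) ^ n * (K ^ 2 * 4 * ((1 + |x|) ^ m) ^ 2) := hbig
        _ = 4 * K ^ 2 * (1 + |x|) ^ N := by
            rw [hN, pow_add, mul_comm 2 m, pow_mul]; ring
    calc |x| ^ r * (K * (1 + |x| ^ p)) ^ 2 ≤ 4 * K ^ 2 * (1 + |x|) ^ N := h4
      _ ≤ 4 * K ^ 2 * ((1 + N / η) ^ N * Real.exp (η * |x|)) :=
          mul_le_mul_of_nonneg_left (aux_pow_le_exp hη0 N |x| hx0) (by positivity)
      _ = C₂ * Real.exp (η * |x|) := by rw [hC₂]; ring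
  -- final pointwise bound
  set t : ℝ := G.toReal with ht
  have ht0 : 0 ≤ t := ENNReal.toReal_nonneg
  set Cg : ℝ := t⁻¹ * Real.exp (2 * θ * D) * C₂ with hCg
  have hC₂0 : 0 ≤ C₂ := by rw [hC₂]; positivity
  have hbound : ∀ x : ℝ, |x| ^ r * (1 / (t * b x ^ 2 * φ x)) ≤ Cg * Real.exp (-η * |x|) := by
    intro x
    have hx0 : (0:ℝ) ≤ |x| := abs_nonneg x
    have hrpow0 : (0:ℝ) ≤ |x| ^ r := Real.rpow_nonneg hx0 r
    have hφ0 : 0 ≤ (φ x)⁻¹ := by rw [hφ x]; positivity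
    have e0 : 1 / (t * b x ^ 2 * φ x) = t⁻¹ * ((b x ^ 2)⁻¹ * (φ x)⁻¹) := by
      rw [one_div, mul_inv, mul_inv]; ring
    rw [e0]
    have A1 : (b x ^ 2)⁻¹ ≤ (K * (1 + |x| ^ p)) ^ 2 := hbinv2 x |x| le_rfl
    have A2 := hφb x
    have A3 := hpoly x
    have step1 : |x| ^ r * (t⁻¹ * ((b x ^ 2)⁻¹ * (φ x)⁻¹))
        ≤ t⁻¹ * ((|x| ^ r * (K * (1 + |x| ^ p)) ^ 2) *
            (Real.exp (2 * θ * D) * Real.exp (-(2 * θ * ε) * |x|))) := by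
      have hbinv0 : (0:ℝ) ≤ (b x ^ 2)⁻¹ := by positivity
      have e1 : |x| ^ r * (t⁻¹ * ((b x ^ 2)⁻¹ * (φ x)⁻¹))
          = t⁻¹ * ((|x| ^ r * (b x ^ 2)⁻¹) * (φ x)⁻¹) := by ring
      rw [e1]
      apply mul_le_mul_of_nonneg_left _ (inv_nonneg.mpr ht0)
      apply mul_le_mul (mul_le_mul_of_nonneg_left A1 hrpow0) A2 hφ0 (by positivity)
    have step2 : t⁻¹ * ((|x| ^ r * (K * (1 + |x| ^ p)) ^ 2) *
            (Real.exp (2 * θ * D) * Real.exp (-(2 * θ * ε) * |x|)))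
        ≤ t⁻¹ * ((C₂ * Real.exp (η * |x|)) *
            (Real.exp (2 * θ * D) * Real.exp (-(2 * θ * ε) * |x|))) := by
      apply mul_le_mul_of_nonneg_left _ (inv_nonneg.mpr ht0)
      apply mul_le_mul_of_nonneg_right A3 (by positivity)
    have step3 : t⁻¹ * ((C₂ * Real.exp (η * |x|)) *
            (Real.exp (2 * θ * D) * Real.exp (-(2 * θ * ε) * |x|)))
        = Cg * Real.exp (-η * |x|) := by
      have eexp : Real.exp (η * |x|) * (Real.exp (2 * θ * D) * Real.exp (-(2 * θ * ε) * |x|))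
          = Real.exp (2 * θ * D) * Real.exp (-η * |x|) := by
        simp only [← Real.exp_add]
        congr 1
        rw [hη]; ring
      calc t⁻¹ * ((C₂ * Real.exp (η * |x|)) *
            (Real.exp (2 * θ * D) * Real.exp (-(2 * θ * ε) * |x|)))
          = t⁻¹ * C₂ * (Real.exp (η * |x|) *
            (Real.exp (2 * θ * D) * Real.exp (-(2 * θ * ε) * |x|))) := by ring
        _ = t⁻¹ * C₂ * (Real.exp (2 * θ * D) * Real.exp (-η * |x|)) := by rw [eexp]
        _ = Cg * Real.exp (-η * |x|) := by rw [hCg]; ring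
    linarith [step1, step2, le_of_eq step3]
  calc (∫⁻ x : ℝ, ENNReal.ofReal (|x| ^ r * (1 / (G.toReal * (b x) ^ 2 * φ x))))
      ≤ ∫⁻ x : ℝ, ENNReal.ofReal (Cg * Real.exp (-η * |x|)) :=
        lintegral_mono fun x => ENNReal.ofReal_le_ofReal (hbound x)
    _ < ⊤ := Integrable.lintegral_lt_top ((aux_integrable_exp_neg_abs hη0).const_mul Cg)
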